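/- In ℓ^∞, the sequence x_n (first n coordinates 0, rest equal to 1) order converges to 0 but does not converge to 0 in the interval topology τ_e, since it eventually avoids no basic neighborhood of the form (-e₁, e₁). Hence τ_e-convergence is strictly stronger than order convergence. -/

import Mathlib

universe u
variable {E : Type u} [Lattice E] [AddCommGroup E] [CovariantClass E E (· + ·) (· ≤ ·)]

/-- A net `x` order converges to `a`: there is a downward directed set `S` of upper bounds
with infimum `0` such that each `y ∈ S` eventually dominates `|x α - a|`. -/
def OrderConv {ι : Type*} [Preorder ι] (x : ι → E) (a : E) : Prop :=
  ∃ S : Set E, S.Nonempty ∧ DirectedOn (· ≥ ·) S ∧ IsGLB S 0 ∧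
    ∀ y ∈ S, ∃ α₀, ∀ α, α₀ ≤ α → |x α - a| ≤ y

/-- `A` is quasi-order closed: whenever a net in `A` increases to its supremum `a`
or decreases to its infimum `a`, then `a ∈ A`. -/
def QuasiOrderClosed (A : Set E) : Prop :=
  ∀ (ι : Type u) [Preorder ι] [Nonempty ι] [IsDirected ι (· ≤ ·)]
    (x : ι → E) (a : E), (∀ α, x α ∈ A) →
    ((Monotone x ∧ IsLUB (Set.range x) a) ∨ (Antitone x ∧ IsGLB (Set.range x) a)) →
    a ∈ A

/-- `A` is order closed: it contains the limits of order convergent nets contained in it. -/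
def OrderClosedSet (A : Set E) : Prop :=
  ∀ (ι : Type u) [Preorder ι] [Nonempty ι] [IsDirected ι (· ≤ ·)]
    (x : ι → E) (a : E), (∀ α, x α ∈ A) → OrderConv x a → a ∈ A

/-- `A` is solid. -/
def Solid (A : Set E) : Prop := ∀ x ∈ A, ∀ y : E, |y| ≤ |x| → y ∈ A

/-- Dedekind completeness: every nonempty set bounded above has a supremum. -/
def DedekindComplete (E : Type u) [Lattice E] : Prop :=
  ∀ A : Set E, A.Nonempty → BddAbove A → ∃ s, IsLUB A s

/-- `ℓ^∞`, realized as the bounded (automatically continuous) functions `ℕ → ℝ`,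
with the pointwise (coordinatewise) order. -/
noncomputable abbrev Linf : Type := BoundedContinuousFunction ℕ ℝ

/-- `e₁ = (1,0,0,…)`. -/
noncomputable def eOne : Linf :=
  BoundedContinuousFunction.ofNormedAddCommGroup (fun k => if k = 0 then 1 else 0)
    continuous_of_discreteTopology 1 (by intro k; by_cases h : k = 0 <;> simp [h])

/-- `xSeq n` has its first `n` coordinates equal to `0` and the rest equal to `1`. -/
noncomputable def xSeq (n : ℕ) : Linf :=
  BoundedContinuousFunction.ofNormedAddCommGroup (fun k => if k < n then 0 else 1)
    continuous_of_discreteTopology 1 (by intro k; by_cases h : k < n <;> simp [h])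

/-- The interval topology `τ_e`, generated by the open order intervals. -/
def tauE (E : Type u) [Lattice E] : TopologicalSpace E :=
  TopologicalSpace.generateFrom {S : Set E | ∃ a b : E, a < b ∧ S = Set.Ioo a b}


lemma Linf.le_iff {f g : Linf} : f ≤ g ↔ ∀ k, f k ≤ g k := Iff.rfl
lemma xSeq_apply (n k : ℕ) : xSeq n k = if k < n then 0 else 1 := rfl
lemma eOne_apply (k : ℕ) : eOne k = if k = 0 then 1 else 0 := rfl

lemma xSeq_antitone : Antitone xSeq := by
  intro m n hmn
  rw [Linf.le_iff]
  intro k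
  simp only [xSeq_apply]
  split_ifs with h1 h2 h2 <;> norm_num
  exact h1 (h2.trans_le hmn)

lemma xSeq_nonneg (n : ℕ) : 0 ≤ xSeq n := by
  rw [Linf.le_iff]; intro k
  simp only [xSeq_apply, BoundedContinuousFunction.coe_zero, Pi.zero_apply]
  split_ifs <;> norm_num

lemma xSeq_glb : IsGLB (Set.range xSeq) 0 := by
  constructor
  · rintro _ ⟨n, rfl⟩; exact xSeq_nonneg n
  · rintro b hb
    rw [Linf.le_iff]; intro k
    have := hb (Set.mem_range_self (k + 1))
    have h2 := (Linf.le_iff.mp this) k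
    simpa [xSeq_apply, Nat.lt_succ_self] using h2

lemma not_xSeq_le_eOne (n : ℕ) : ¬ xSeq n ≤ eOne := by
  intro h
  have := (Linf.le_iff.mp h) (max n 1)
  rw [xSeq_apply, eOne_apply] at this
  have h1 : ¬ max n 1 < n := by omega
  have h2 : max n 1 ≠ 0 := by omega
  rw [if_neg h1, if_neg h2] at this
  norm_num at this

lemma eOne_pos : (0 : Linf) < eOne := by
  refine lt_of_le_of_ne ?_ ?_
  · rw [Linf.le_iff]; intro k
    simp only [eOne_apply, BoundedContinuousFunction.coe_zero, Pi.zero_apply]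
    split_ifs <;> norm_num
  · intro h
    have := congrArg (fun f : Linf => f 0) h
    simp [eOne_apply] at this

/-- in `ℓ^∞`, the sequence `xSeq` order converges to `0` (with a dominating
sequence `y_n ↓ 0`), is never in the basic neighborhood `(-e₁, e₁)` of `0`, and does not
`τ_e`-converge to `0`; hence `τ_e`-convergence is strictly stronger than order convergence. -/
theorem orderConv_not_tauE_conv :
    (∃ y : ℕ → Linf, Antitone y ∧ IsGLB (Set.range y) 0 ∧ ∀ n, |xSeq n - 0| ≤ y n) ∧
    (∀ n : ℕ, xSeq n ∉ Set.Ioo (-eOne) eOne) ∧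
    ¬ Filter.Tendsto xSeq Filter.atTop (@nhds Linf (tauE Linf) 0) := by
  have hnot : ∀ n : ℕ, xSeq n ∉ Set.Ioo (-eOne) eOne := by
    intro n hn
    exact not_xSeq_le_eOne n hn.2.le
  refine ⟨⟨xSeq, xSeq_antitone, xSeq_glb, fun n => ?_⟩, hnot, ?_⟩
  · rw [sub_zero, abs_of_nonneg (xSeq_nonneg n)]
  · intro h
    have hopen : @IsOpen Linf (tauE Linf) (Set.Ioo (-eOne) eOne) :=
      TopologicalSpace.GenerateOpen.basic _ ⟨-eOne, eOne, (neg_lt_zero.mpr eOne_pos).trans eOne_pos, rfl⟩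
    have hmem : Set.Ioo (-eOne) eOne ∈ @nhds Linf (tauE Linf) 0 :=
      @IsOpen.mem_nhds Linf (tauE Linf) 0 (Set.Ioo (-eOne) eOne) hopen ⟨neg_lt_zero.mpr eOne_pos, eOne_pos⟩
    have h2 := h hmem
    rw [Filter.mem_map] at h2
    obtain ⟨N, hN⟩ := Filter.mem_atTop_sets.mp h2
    exact hnot N (hN N le_rfl)
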